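/- Under Assumptions (A1) and (A3), define for ε, δ > 0 and t ≥ 0: 𝒮₁^{ε,δ}(t) := ∫₀ᵗ ( (1/ε)·κ'(x(π_δ(s)))·f(x(π_δ(s)))·(s − π_δ(s)) − (δ/(2ε))·κ'(x(s))·f(x(s)) )·E(s,t) ds. Then for every integer p ≥ 1 there exists a constant C > 0, independent of t, ε and δ, such that |𝒮₁^{ε,δ}(t)|^p ≤ C·δ^{2p}/ε^p for all ε, δ ∈ (0,1) and all t ≥ 0. -/

import Mathlib

open Set Filter MeasureTheory intervalIntegral Real
open scoped Topology


lemma aux_slope_bound {f : ℝ → ℝ} (hfd : Differentiable ℝ f) {lam : ℝ}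
    (hcontr : ∀ a b : ℝ, (a - b) * (f a - f b) ≤ -lam * (a - b) ^ 2) (a : ℝ) :
    deriv f a ≤ -lam := by
  have h := (hfd a).hasDerivAt
  have hs := hasDerivAt_iff_tendsto_slope.mp h
  refine le_of_tendsto hs ?_
  filter_upwards [self_mem_nhdsWithin] with b hb
  have hne : b ≠ a := hb
  have h1 := hcontr b a
  have h2 : (0:ℝ) < (b - a)^2 := by
    have := sub_ne_zero.mpr hne; positivity
  rw [slope_def_field]
  have key : (f b - f a) / (b - a) = ((b - a) * (f b - f a)) / ((b - a) ^ 2) := by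
    rw [sq]
    rw [mul_div_mul_left _ _ (sub_ne_zero.mpr hne)]
  rw [key, div_le_iff₀ h2]
  nlinarith [h1]

lemma aux_abs_deriv_le {κ : ℝ → ℝ} (hκd : Differentiable ℝ κ) {L : ℝ}
    (h : ∀ a b : ℝ, |κ a - κ b| ≤ L * |a - b|) (a : ℝ) : |deriv κ a| ≤ L := by
  have hs := hasDerivAt_iff_tendsto_slope.mp (hκd a).hasDerivAt
  have habs : Tendsto (fun b => |slope κ a b|) (𝓝[≠] a) (𝓝 |deriv κ a|) :=
    (continuous_abs.tendsto _).comp hs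
  refine le_of_tendsto habs ?_
  filter_upwards [self_mem_nhdsWithin] with b hb
  have hne : (b:ℝ) ≠ a := hb
  rw [slope_def_field, abs_div]
  rw [div_le_iff₀ (by simpa [sub_eq_zero] using abs_pos.mpr (sub_ne_zero.mpr hne))]
  exact h b a

lemma aux_abs_deriv_le' {f : ℝ → ℝ} (hfd : Differentiable ℝ f) {ξ μ : ℝ} {q : ℕ}
    (hξ : 0 ≤ ξ) (hμ : 0 ≤ μ)
    (hfLip : ∀ a b : ℝ, |f a - f b| ≤ (ξ * (|a| ^ q + |b| ^ q) + μ) * |a - b|) (a : ℝ) :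
    |deriv f a| ≤ ξ * (|a| ^ q + |a| ^ q) + μ := by
  have hs := hasDerivAt_iff_tendsto_slope.mp (hfd a).hasDerivAt
  have habs : Tendsto (fun b => |slope f a b|) (𝓝[≠] a) (𝓝 |deriv f a|) :=
    (continuous_abs.tendsto _).comp hs
  have hrhs : Tendsto (fun b : ℝ => ξ * (|b| ^ q + |a| ^ q) + μ) (𝓝[≠] a)
      (𝓝 (ξ * (|a| ^ q + |a| ^ q) + μ)) := by
    apply Tendsto.mono_left ?_ nhdsWithin_le_nhds
    exact (Continuous.tendsto (by continuity) a)
  refine le_of_tendsto_of_tendsto' habs hrhs ?_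
  intro b
  rcases eq_or_ne b a with rfl | hne
  · simp; positivity
  · rw [slope_def_field, abs_div]
    rw [div_le_iff₀ (abs_pos.mpr (sub_ne_zero.mpr hne))]
    exact hfLip b a


lemma aux_key {F : ℝ → ℝ} (hF : Continuous F) {x₀ R : ℝ} {x : ℝ → ℝ}
    (hx : ∀ t : ℝ, 0 ≤ t → x t = x₀ + ∫ s in (0:ℝ)..t, F (x s))
    (hR0 : |x₀| ≤ R) (hup : F R < 0) (hlo : 0 < F (-R))
    {T : ℝ} (hT : 0 ≤ T) (hig : IntegrableOn (fun s => F (x s)) (Set.Ioc 0 T)) :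
    ContinuousOn x (Set.Icc 0 T) ∧ (∀ s ∈ Set.Icc 0 T, |x s| ≤ R) ∧
      (∀ s ∈ Set.Ico 0 T, HasDerivWithinAt x (F (x s)) (Set.Ici s) s) := by
  set g := fun s => F (x s) with hgdef
  have hInt : IntervalIntegrable g volume 0 T :=
    (intervalIntegrable_iff_integrableOn_Ioc_of_le hT).mpr hig
  have hIcont : ContinuousOn (fun t => ∫ s in (0:ℝ)..t, g s) (Icc 0 T) := by
    have := intervalIntegral.continuousOn_primitive_interval
      (a := (0:ℝ)) (b := T) (μ := volume) (f := g)
      (by rw [uIcc_of_le hT]; exact (integrableOn_Icc_iff_integrableOn_Ioc).mpr hig)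
    rwa [uIcc_of_le hT] at this
  have hxeq : EqOn x (fun t => x₀ + ∫ s in (0:ℝ)..t, g s) (Icc 0 T) := fun t ht => hx t ht.1
  have hxcont : ContinuousOn x (Icc 0 T) := (continuousOn_const.add hIcont).congr hxeq
  have hgcont : ContinuousOn g (Icc 0 T) := hF.comp_continuousOn hxcont
  have hder : ∀ s ∈ Ico 0 T, HasDerivWithinAt x (g s) (Ici s) s := by
    intro s hs
    have hmemIoi : Icc 0 T ∈ 𝓝[>] s :=
      mem_of_superset (inter_mem self_mem_nhdsWithin
        (mem_nhdsWithin_of_mem_nhds (Iio_mem_nhds hs.2)))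
        (fun u hu => ⟨le_trans hs.1 hu.1.le, hu.2.le⟩)
    have h1 : IntervalIntegrable g volume 0 s :=
      hInt.mono_set (by rw [uIcc_of_le hs.1, uIcc_of_le hT]; exact Icc_subset_Icc le_rfl hs.2.le)
    have hmeas : StronglyMeasurableAtFilter g (𝓝[Ioi s] s) volume :=
      ⟨Icc 0 T, hmemIoi, hgcont.aestronglyMeasurable measurableSet_Icc⟩
    have hcw : ContinuousWithinAt g (Ioi s) s :=
      (hgcont s ⟨hs.1, hs.2.le⟩).mono_of_mem_nhdsWithin hmemIoi
    have hI : HasDerivWithinAt (fun u => ∫ τ in (0:ℝ)..u, g τ) (g s) (Ici s) s :=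
      intervalIntegral.integral_hasDerivWithinAt_right h1 hmeas hcw
    have hxI : HasDerivWithinAt (fun u => x₀ + ∫ τ in (0:ℝ)..u, g τ) (g s) (Ici s) s :=
      hI.const_add x₀
    exact hxI.congr (fun u hu => hx u (le_trans hs.1 hu)) (hx s hs.1)
  have hx00 : x 0 = x₀ := by
    have := hx 0 le_rfl
    simpa using this
  have hupper : ∀ s ∈ Icc 0 T, x s ≤ R := by
    have h0 : x 0 ≤ R := by rw [hx00]; exact (abs_le.mp hR0).2
    exact fun s hs =>
      image_le_of_deriv_right_lt_deriv_boundary' (B := fun _ => R) (B' := fun _ => 0)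
        hxcont hder h0 continuousOn_const
        (fun u _ => hasDerivWithinAt_const u _ R)
        (fun u _ hcu => by rw [hgdef]; simp only; rw [hcu]; exact hup) hs
  have hlower : ∀ s ∈ Icc 0 T, -R ≤ x s := by
    have h0 : -(x 0) ≤ R := by rw [hx00]; linarith [(abs_le.mp hR0).1]
    intro s hs
    have := image_le_of_deriv_right_lt_deriv_boundary'
        (f := fun u => -(x u)) (f' := fun u => -(g u)) (B := fun _ => R) (B' := fun _ => 0)
        hxcont.neg (fun u hu => (hder u hu).neg) h0 continuousOn_const
        (fun u _ => hasDerivWithinAt_const u _ R)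
        (fun u _ hcu => by
          rw [hgdef]; simp only
          have hxu : x u = -R := by
            have : -(x u) = R := hcu
            linarith
          rw [hxu]; linarith [hlo]) hs
    linarith
  refine ⟨hxcont, fun s hs => abs_le.mpr ⟨hlower s hs, hupper s hs⟩, hder⟩

lemma aux_global {F : ℝ → ℝ} (hF : Continuous F) {x₀ R : ℝ} {x : ℝ → ℝ}
    (hx : ∀ t : ℝ, 0 ≤ t → x t = x₀ + ∫ s in (0:ℝ)..t, F (x s))
    (hR0 : |x₀| ≤ R) (hup : F R < 0) (hlo : 0 < F (-R)) :
    ∀ T : ℝ, 0 ≤ T → IntegrableOn (fun s => F (x s)) (Set.Ioc 0 T) := by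
  intro T hT
  set g := fun s => F (x s) with hgdef
  obtain ⟨MF, hMF⟩ : ∃ MF, ∀ y ∈ Icc (-R) R, ‖F y‖ ≤ MF :=
    (isCompact_Icc).exists_bound_of_continuousOn hF.continuousOn
  set S := {τ | τ ∈ Icc 0 T ∧ IntegrableOn g (Ioc 0 τ)} with hSdef
  have h0S : (0:ℝ) ∈ S := ⟨⟨le_rfl, hT⟩, by simp⟩
  have hne : S.Nonempty := ⟨0, h0S⟩
  have hbdd : BddAbove S := ⟨T, fun τ hτ => hτ.1.2⟩
  set τ0 := sSup S with hτ0def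
  have hτ0Icc : τ0 ∈ Icc 0 T := ⟨le_csSup hbdd h0S, csSup_le hne (fun τ hτ => hτ.1.2)⟩
  have hbd : ∀ s ∈ Ico 0 τ0, |x s| ≤ R := by
    intro s hs
    obtain ⟨σ, hσS, hσ⟩ := exists_lt_of_lt_csSup hne hs.2
    exact (aux_key hF hx hR0 hup hlo hσS.1.1 hσS.2).2.1 s ⟨hs.1, hσ.le⟩
  have hcont : ∀ s ∈ Ioo 0 τ0, ContinuousWithinAt g (Ioo 0 τ0) s := by
    intro s hs
    obtain ⟨σ, hσS, hσ⟩ := exists_lt_of_lt_csSup hne hs.2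
    have hxc := (aux_key hF hx hR0 hup hlo hσS.1.1 hσS.2).1
    have hcw : ContinuousWithinAt g (Icc 0 σ) s :=
      (hF.comp_continuousOn hxc) s ⟨hs.1.le, hσ.le⟩
    refine hcw.mono_of_mem_nhdsWithin ?_
    refine mem_of_superset (inter_mem self_mem_nhdsWithin
      (mem_nhdsWithin_of_mem_nhds (Iio_mem_nhds hσ))) ?_
    exact fun u hu => ⟨hu.1.1.le, hu.2.le⟩
  have hτ0S : τ0 ∈ S := by
    refine ⟨hτ0Icc, ?_⟩
    rcases eq_or_lt_of_le hτ0Icc.1 with heq | hpos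
    · simp [← heq]
    · rw [integrableOn_Ioc_iff_integrableOn_Ioo]
      have hcont' : ContinuousOn g (Ioo 0 τ0) := fun s hs => hcont s hs
      have hmeas : AEStronglyMeasurable g (volume.restrict (Ioo 0 τ0)) :=
        hcont'.aestronglyMeasurable measurableSet_Ioo
      refine Integrable.mono' (g := fun _ => MF)
        ((integrableOn_const_iff).mpr (Or.inr measure_Ioo_lt_top)) hmeas ?_
      rw [ae_restrict_iff' measurableSet_Ioo]
      filter_upwards with s hs
      have := hbd s ⟨hs.1.le, hs.2⟩
      exact hMF (x s) (abs_le.mp this |> fun h => ⟨h.1, h.2⟩)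
  have hτ0T : τ0 = T := by
    by_contra hne'
    have hlt' : τ0 < T := lt_of_le_of_ne hτ0Icc.2 hne'
    have hx0 : ∀ s ∈ Ioc τ0 T, x s = x₀ := by
      intro s hs
      have h0s : (0:ℝ) ≤ s := le_trans hτ0Icc.1 hs.1.le
      have hnotint : ¬ IntervalIntegrable g volume 0 s := by
        intro hcon
        have hsS : s ∈ S :=
          ⟨⟨h0s, hs.2⟩, (intervalIntegrable_iff_integrableOn_Ioc_of_le h0s).mp hcon⟩
        exact absurd (le_csSup hbdd hsS) (not_le.mpr hs.1)
      have := hx s h0s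
      rw [intervalIntegral.integral_undef hnotint] at this
      simpa using this
    have hconst : IntegrableOn g (Ioc τ0 T) := by
      refine IntegrableOn.congr_fun (f := fun _ => F x₀)
        ((integrableOn_const_iff).mpr (Or.inr measure_Ioc_lt_top)) (fun s hs => ?_) measurableSet_Ioc
      simp [hgdef, hx0 s hs]
    have hTS : T ∈ S := by
      refine ⟨⟨hT, le_rfl⟩, (hτ0S.2.union hconst).mono_set ?_⟩
      intro u hu
      rcases le_or_gt u τ0 with h | h
      · exact Or.inl ⟨hu.1, h⟩
      · exact Or.inr ⟨h, hu.2⟩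
    exact absurd (le_csSup hbdd hTS) (not_le.mpr hlt')
  rw [← hτ0T]
  exact hτ0S.2

lemma aux_traj {F : ℝ → ℝ} (hF : Continuous F) {x₀ R : ℝ} {x : ℝ → ℝ}
    (hx : ∀ t : ℝ, 0 ≤ t → x t = x₀ + ∫ s in (0:ℝ)..t, F (x s))
    (hR0 : |x₀| ≤ R) (hup : F R < 0) (hlo : 0 < F (-R)) :
    (∀ s : ℝ, 0 ≤ s → |x s| ≤ R) ∧ ContinuousOn x (Set.Ici 0) ∧
      (∀ s : ℝ, 0 ≤ s → HasDerivWithinAt x (F (x s)) (Set.Ici 0) s) ∧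
      (∀ s : ℝ, 0 < s → HasDerivAt x (F (x s)) s) ∧
      (∀ T : ℝ, 0 ≤ T → IntervalIntegrable (fun s => F (x s)) volume 0 T) := by
  have hglob := aux_global hF hx hR0 hup hlo
  have hkey : ∀ T : ℝ, 0 ≤ T → ContinuousOn x (Set.Icc 0 T) ∧
      (∀ s ∈ Set.Icc 0 T, |x s| ≤ R) ∧
      (∀ s ∈ Set.Ico 0 T, HasDerivWithinAt x (F (x s)) (Set.Ici s) s) :=
    fun T hT => aux_key hF hx hR0 hup hlo hT (hglob T hT)
  have hbd : ∀ s : ℝ, 0 ≤ s → |x s| ≤ R := fun s hs =>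
    (hkey (s+1) (by linarith)).2.1 s ⟨hs, by linarith⟩
  have hxcont : ContinuousOn x (Set.Ici 0) := by
    intro s hs
    have h1 : ContinuousWithinAt x (Set.Icc 0 (s+1)) s :=
      (hkey (s+1) (by exact le_trans hs (by linarith))).1 s ⟨hs, by linarith⟩
    refine h1.mono_of_mem_nhdsWithin ?_
    refine Filter.mem_of_superset (Filter.inter_mem self_mem_nhdsWithin
      (mem_nhdsWithin_of_mem_nhds (Iic_mem_nhds (lt_add_one s)))) ?_
    exact fun u hu => ⟨hu.1, hu.2⟩
  have hgcont : ContinuousOn (fun s => F (x s)) (Set.Ici 0) := hF.comp_continuousOn hxcont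
  have hIntT : ∀ T : ℝ, 0 ≤ T → IntervalIntegrable (fun s => F (x s)) volume 0 T :=
    fun T hT => (intervalIntegrable_iff_integrableOn_Ioc_of_le hT).mpr (hglob T hT)
  have hdat : ∀ s : ℝ, 0 < s → HasDerivAt x (F (x s)) s := by
    intro s hs
    have hIci : Set.Ici (0:ℝ) ∈ 𝓝 s := Filter.mem_of_superset (Ioi_mem_nhds hs) Set.Ioi_subset_Ici_self
    have hca : ContinuousAt (fun u => F (x u)) s := hgcont.continuousAt hIci
    have hsm : StronglyMeasurableAtFilter (fun u => F (x u)) (𝓝 s) volume := by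
      refine (hgcont.mono ?_).stronglyMeasurableAtFilter isOpen_Ioi s hs
      exact Set.Ioi_subset_Ici_self
    have hI : HasDerivAt (fun u => ∫ τ in (0:ℝ)..u, F (x τ)) (F (x s)) s :=
      intervalIntegral.integral_hasDerivAt_right (hIntT s hs.le) hsm hca
    have hxI : HasDerivAt (fun u => x₀ + ∫ τ in (0:ℝ)..u, F (x τ)) (F (x s)) s :=
      hI.const_add x₀
    refine hxI.congr_of_eventuallyEq ?_
    filter_upwards [Ioi_mem_nhds hs] with u hu
    exact hx u (le_of_lt hu)
  have hdivi : ∀ s : ℝ, 0 ≤ s → HasDerivWithinAt x (F (x s)) (Set.Ici 0) s := by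
    intro s hs
    rcases eq_or_lt_of_le hs with rfl | hpos
    · exact ((hkey 1 one_pos.le).2.2 0 ⟨le_rfl, one_pos⟩)
    · exact (hdat s hpos).hasDerivWithinAt
  exact ⟨hbd, hxcont, hdivi, hdat, hIntT⟩


/-- The sampling map `π_δ(t) = δ·⌊t/δ⌋`. -/
noncomputable def piD (δ t : ℝ) : ℝ := δ * (⌊t / δ⌋ : ℤ)


lemma piD_le {δ : ℝ} (hδ : 0 < δ) (s : ℝ) : piD δ s ≤ s := by
  have h := Int.floor_le (s / δ)
  have := mul_le_mul_of_nonneg_left h hδ.le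
  rwa [mul_div_cancel₀ s hδ.ne'] at this

lemma lt_piD_add {δ : ℝ} (hδ : 0 < δ) (s : ℝ) : s < piD δ s + δ := by
  have h := Int.lt_floor_add_one (s / δ)
  have := mul_lt_mul_of_pos_left h hδ
  rw [mul_add, mul_one, mul_div_cancel₀ s hδ.ne'] at this
  unfold piD
  linarith [this]

lemma piD_nonneg {δ : ℝ} (hδ : 0 < δ) {s : ℝ} (hs : 0 ≤ s) : 0 ≤ piD δ s := by
  have : (0:ℤ) ≤ ⌊s / δ⌋ := Int.floor_nonneg.mpr (div_nonneg hs hδ.le)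
  have : (0:ℝ) ≤ (⌊s / δ⌋ : ℤ) := by exact_mod_cast this
  exact mul_nonneg hδ.le this

lemma piD_zero {δ : ℝ} (hδ : 0 < δ) : piD δ 0 = 0 := by
  simp [piD, Int.floor_eq_zero_iff, zero_div]

lemma piD_eq {δ : ℝ} (hδ : 0 < δ) {s u : ℝ} (h1 : piD δ s ≤ u) (h2 : u < piD δ s + δ) :
    piD δ u = piD δ s := by
  unfold piD at *
  congr 1
  have hfl : ⌊u / δ⌋ = ⌊s / δ⌋ := by
    rw [Int.floor_eq_iff]
    constructor
    · rw [le_div_iff₀ hδ, mul_comm]; exact h1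
    · rw [div_lt_iff₀ hδ]
      push_cast
      calc u < δ * ↑⌊s / δ⌋ + δ := h2
        _ = (↑⌊s / δ⌋ + 1) * δ := by ring
  exact_mod_cast hfl

lemma piD_mono {δ : ℝ} (hδ : 0 < δ) {s u : ℝ} (h : s ≤ u) : piD δ s ≤ piD δ u := by
  have : ⌊s / δ⌋ ≤ ⌊u / δ⌋ := Int.floor_le_floor (by gcongr)
  have : ((⌊s / δ⌋ : ℤ) : ℝ) ≤ ((⌊u / δ⌋ : ℤ) : ℝ) := by exact_mod_cast this
  exact mul_le_mul_of_nonneg_left this hδ.le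

lemma piD_add_le {δ : ℝ} (hδ : 0 < δ) {s u : ℝ} (h : piD δ s < piD δ u) :
    piD δ s + δ ≤ piD δ u := by
  unfold piD at *
  have hfl : ⌊s / δ⌋ < ⌊u / δ⌋ := by
    by_contra hc
    push_neg at hc
    have : ((⌊u / δ⌋ : ℤ) : ℝ) ≤ ((⌊s / δ⌋ : ℤ) : ℝ) := by exact_mod_cast hc
    nlinarith
  have : (⌊s / δ⌋ : ℝ) + 1 ≤ (⌊u / δ⌋ : ℝ) := by exact_mod_cast hfl
  nlinarith

section rho
variable {δ : ℝ}

noncomputable def rhoD (δ : ℝ) : ℝ → ℝ := fun s => ((s - piD δ s)^2 - δ*(s - piD δ s))/2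

lemma rhoD_bound1 (hδ : 0 < δ) (s : ℝ) : |rhoD δ s| ≤ (δ/2) * (s - piD δ s) := by
  have h1 := piD_le hδ s
  have h2 := lt_piD_add hδ s
  rw [abs_le]
  constructor <;> [skip; skip] <;> unfold rhoD <;> nlinarith

lemma rhoD_bound2 (hδ : 0 < δ) (s : ℝ) : |rhoD δ s| ≤ (δ/2) * (piD δ s + δ - s) := by
  have h1 := piD_le hδ s
  have h2 := lt_piD_add hδ s
  rw [abs_le]
  constructor <;> unfold rhoD <;> nlinarith

lemma rhoD_bound (hδ : 0 < δ) (s : ℝ) : |rhoD δ s| ≤ δ^2/8 := by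
  have h1 := piD_le hδ s
  have h2 := lt_piD_add hδ s
  rw [abs_le]
  constructor <;> unfold rhoD <;> nlinarith [sq_nonneg (s - piD δ s - δ/2)]

lemma rhoD_zero (hδ : 0 < δ) : rhoD δ 0 = 0 := by
  unfold rhoD
  rw [piD_zero hδ]
  ring

lemma rhoD_lip' (hδ : 0 < δ) {s u : ℝ} (h : s ≤ u) :
    |rhoD δ s - rhoD δ u| ≤ (δ/2) * (u - s) := by
  rcases eq_or_lt_of_le (piD_mono hδ h) with heq | hlt
  · -- same cell
    have h1 := piD_le hδ s
    have h2 := lt_piD_add hδ s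
    have h3 := piD_le hδ u
    have h4 := lt_piD_add hδ u
    unfold rhoD
    rw [← heq, abs_le]
    constructor <;> nlinarith [sq_nonneg (s - u)]
  · have hgap := piD_add_le hδ hlt
    have hb1 := rhoD_bound2 hδ s
    have hb2 := rhoD_bound1 hδ u
    have h3 := piD_le hδ u
    calc |rhoD δ s - rhoD δ u| ≤ |rhoD δ s| + |rhoD δ u| := abs_sub _ _
      _ ≤ (δ/2) * (piD δ s + δ - s) + (δ/2) * (u - piD δ u) := add_le_add hb1 hb2
      _ ≤ (δ/2) * (u - s) := by nlinarith

lemma rhoD_lip (hδ : 0 < δ) (s u : ℝ) : |rhoD δ s - rhoD δ u| ≤ (δ/2) * |s - u| := by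
  rcases le_total s u with h | h
  · rw [abs_of_nonpos (by linarith : s - u ≤ 0)]
    simpa using rhoD_lip' hδ h
  · rw [abs_of_nonneg (by linarith : 0 ≤ s - u), abs_sub_comm]
    exact rhoD_lip' hδ h

lemma rhoD_continuous (hδ : 0 < δ) : Continuous (rhoD δ) := by
  have : LipschitzWith (Real.toNNReal (δ/2)) (rhoD δ) := by
    apply LipschitzWith.of_dist_le_mul
    intro s u
    rw [Real.dist_eq, Real.dist_eq, Real.coe_toNNReal _ (by positivity)]
    exact rhoD_lip hδ s u
  exact this.continuous

lemma rhoD_hasDeriv (hδ : 0 < δ) (s : ℝ) :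
    HasDerivWithinAt (rhoD δ) (s - piD δ s - δ/2) (Ioi s) s := by
  set c := piD δ s with hc
  have hQ : HasDerivAt (fun u => ((u - c)^2 - δ*(u - c))/2) (s - c - δ/2) s := by
    have h1 : HasDerivAt (fun u : ℝ => u - c) 1 s := (hasDerivAt_id s).sub_const c
    have h2 : HasDerivAt (fun u : ℝ => (u - c)^2) (2*(s-c)) s := by
      have := h1.fun_pow 2
      simpa using this
    have h3 : HasDerivAt (fun u : ℝ => δ*(u - c)) δ s := by simpa using h1.const_mul δ
    have := (h2.fun_sub h3).div_const 2
    refine this.congr_deriv ?_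
    ring
  refine (hQ.hasDerivWithinAt).congr_of_eventuallyEq ?_ rfl
  have hmem : Ioo s (c + δ) ∈ 𝓝[>] s := Ioo_mem_nhdsGT_of_mem ⟨le_rfl, lt_piD_add hδ s⟩
  filter_upwards [hmem] with u hu
  have : piD δ u = c := piD_eq hδ (le_trans (piD_le hδ s) hu.1.le) hu.2
  unfold rhoD
  rw [this]

set_option maxHeartbeats 4000000 in
/-- Uniform-in-time bound `|𝒮₁^{ε,δ}(t)|^p ≤ C·δ^{2p}/ε^p` where
`𝒮₁^{ε,δ}(t) = ∫₀ᵗ ((1/ε)·κ'(x(π_δ(s)))·f(x(π_δ(s)))·(s − π_δ(s))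
− (δ/(2ε))·κ'(x(s))·f(x(s)))·E(s,t) ds`. -/
theorem stmt9
    (f κ : ℝ → ℝ) (x₀ : ℝ) (x : ℝ → ℝ)
    -- Assumption (A1)
    (lam ξ μ Lκ γ : ℝ) (q : ℕ)
    (hlam : 0 < lam) (hξ : 0 < ξ) (hμ : 0 < μ) (hLκ : 0 < Lκ) (hγ : 0 < γ)
    (hcontr : ∀ a b : ℝ, (a - b) * (f a - f b) ≤ -lam * (a - b) ^ 2)
    (hfLip : ∀ a b : ℝ, |f a - f b| ≤ (ξ * (|a| ^ q + |b| ^ q) + μ) * |a - b|)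
    (hκLip : ∀ a b : ℝ, |κ a - κ b| ≤ Lκ * |a - b|)
    (hgap : lam / 2 - Lκ > 0)
    (hκbd : ∀ a : ℝ, |κ a| ≤ γ)
    -- Assumption (A3)
    (hfd : Differentiable ℝ f) (hfd2 : Differentiable ℝ (deriv f))
    (hκd : Differentiable ℝ κ) (hκd2 : Differentiable ℝ (deriv κ))
    (K : ℝ) (hK : ∀ y : ℝ, |deriv (deriv κ) y| ≤ K)
    (cf : ℝ) (rf : ℕ) (hf2 : ∀ y : ℝ, |deriv (deriv f) y| ≤ cf * (1 + |y| ^ rf))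
    (Cstar : ℝ) (hCstar : 0 < Cstar)
    (hint : ∀ m : ℕ, (m = 1 ∨ m = 2) → ∀ t : ℝ, 0 ≤ t →
      (∫ s in (0:ℝ)..t,
        Real.exp ((m : ℝ) * ∫ u in s..t, (deriv f (x u) + deriv κ (x u)))) ≤ Cstar)
    -- the closed-loop ODE `dx/dt = f(x) + κ(x)`, `x(0) = x₀`
    (hx : ∀ t : ℝ, 0 ≤ t → x t = x₀ + ∫ s in (0:ℝ)..t, (f (x s) + κ (x s)))
    :
    ∀ p : ℕ, 1 ≤ p → ∃ C : ℝ, 0 < C ∧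
      ∀ ε δ : ℝ, 0 < ε → ε < 1 → 0 < δ → δ < 1 → ∀ t : ℝ, 0 ≤ t →
      |∫ s in (0:ℝ)..t,
          ((1 / ε) * deriv κ (x (piD δ s)) * f (x (piD δ s)) * (s - piD δ s)
            - (δ / (2 * ε)) * deriv κ (x s) * f (x s)) *
            Real.exp (∫ u in s..t, (deriv f (x u) + deriv κ (x u)))| ^ p
        ≤ C * δ ^ (2 * p) / ε ^ p := by
  intro p hp
  -- basic setup
  have hFc : Continuous (fun y => f y + κ y) := hfd.continuous.add hκd.continuous
  obtain ⟨R, hR0, hRnn, hRlam⟩ : ∃ R : ℝ, |x₀| ≤ R ∧ 0 ≤ R ∧ |f 0| + γ + 1 ≤ lam * R := by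
    refine ⟨max (|x₀|) ((|f 0| + γ + 1) / lam), le_max_left _ _,
      le_trans (abs_nonneg _) (le_max_left _ _), ?_⟩
    have h1 : (|f 0| + γ + 1) / lam ≤ max (|x₀|) ((|f 0| + γ + 1) / lam) := le_max_right _ _
    rw [div_le_iff₀ hlam] at h1
    nlinarith
  have hRpos : 0 < R := by nlinarith [abs_nonneg (f 0)]
  have hup : f R + κ R < 0 := by
    have h1 := hcontr R 0
    have h2 : f R - f 0 ≤ -lam * R := by nlinarith
    have h3 := (abs_le.mp (hκbd R)).2
    have h5 : f 0 ≤ |f 0| := le_abs_self _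
    nlinarith
  have hlo : 0 < f (-R) + κ (-R) := by
    have h1 := hcontr 0 (-R)
    have h2 : f 0 - f (-R) ≤ -lam * R := by nlinarith
    have h3 := (abs_le.mp (hκbd (-R))).1
    have h5 : -|f 0| ≤ f 0 := neg_abs_le _
    nlinarith
  obtain ⟨hbd, hxcont, hdivi, hdat, hIntT⟩ := aux_traj hFc hx hR0 hup hlo
  -- derivative bounds from (A1)
  have hf'le : ∀ a : ℝ, deriv f a ≤ -lam := aux_slope_bound hfd hcontr
  have hκ'le : ∀ a : ℝ, |deriv κ a| ≤ Lκ := aux_abs_deriv_le hκd hκLip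
  have hf'abs : ∀ a : ℝ, |deriv f a| ≤ ξ * (|a| ^ q + |a| ^ q) + μ :=
    aux_abs_deriv_le' hfd hξ.le hμ.le hfLip
  have hKnn : 0 ≤ K := le_trans (abs_nonneg _) (hK 0)
  have hxq : ∀ s : ℝ, 0 ≤ s → |x s| ^ q ≤ R ^ q := fun s hs =>
    pow_le_pow_left₀ (abs_nonneg _) (hbd s hs) q
  -- opaque constants
  obtain ⟨Mf, hMfnn, hMf⟩ : ∃ Mf : ℝ, 0 ≤ Mf ∧ ∀ s : ℝ, 0 ≤ s → |f (x s)| ≤ Mf := by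
    refine ⟨|f 0| + (ξ * (R ^ q + R ^ q) + μ) * R, by positivity, ?_⟩
    intro s hs
    have h1 : |f (x s) - f 0| ≤ (ξ * (|x s| ^ q + |(0:ℝ)| ^ q) + μ) * |x s - 0| := hfLip (x s) 0
    have h2 : |(0:ℝ)| ^ q ≤ R ^ q := by
      rw [abs_zero]
      exact pow_le_pow_left₀ le_rfl hRnn q
    have h3 : (ξ * (|x s| ^ q + |(0:ℝ)| ^ q) + μ) * |x s - 0| ≤ (ξ * (R ^ q + R ^ q) + μ) * R := by
      apply mul_le_mul
      · have := hxq s hs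
        nlinarith
      · simpa using hbd s hs
      · exact abs_nonneg _
      · positivity
    calc |f (x s)| = |f 0 + (f (x s) - f 0)| := by ring_nf
      _ ≤ |f 0| + |f (x s) - f 0| := abs_add_le _ _
      _ ≤ |f 0| + (ξ * (R ^ q + R ^ q) + μ) * R := by linarith [le_trans h1 h3]
  obtain ⟨Df, hDfnn, hDf⟩ : ∃ Df : ℝ, 0 ≤ Df ∧ ∀ s : ℝ, 0 ≤ s → |deriv f (x s)| ≤ Df := by
    refine ⟨2 * ξ * R ^ q + μ, by positivity, ?_⟩
    intro s hs
    refine le_trans (hf'abs (x s)) ?_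
    have := hxq s hs
    nlinarith
  obtain ⟨Bg, hBgnn, hBg⟩ : ∃ Bg : ℝ, 0 ≤ Bg ∧ ∀ s : ℝ, 0 ≤ s → |f (x s) + κ (x s)| ≤ Bg := by
    refine ⟨Mf + γ, by positivity, fun s hs => ?_⟩
    calc |f (x s) + κ (x s)| ≤ |f (x s)| + |κ (x s)| := abs_add_le _ _
      _ ≤ Mf + γ := add_le_add (hMf s hs) (hκbd _)
  obtain ⟨Mh, hMhnn, hMhge⟩ : ∃ v : ℝ, 0 ≤ v ∧ Lκ * Mf ≤ v := ⟨_, by positivity, le_rfl⟩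
  obtain ⟨Lh, hLhnn, hLhge⟩ : ∃ v : ℝ, 0 ≤ v ∧ (K * Mf + Lκ * Df) * Bg ≤ v :=
    ⟨_, by positivity, le_rfl⟩
  obtain ⟨c, hcpos, hcle⟩ : ∃ v : ℝ, 0 < v ∧ Lκ ≤ lam - v :=
    ⟨lam / 2, by positivity, by linarith [hgap]⟩
  obtain ⟨Bw, hBwnn, hBwge⟩ : ∃ v : ℝ, 0 ≤ v ∧ Df + Lκ ≤ v := ⟨_, by positivity, le_rfl⟩
  obtain ⟨Cphi, hCphinn, hCphige⟩ : ∃ v : ℝ, 0 ≤ v ∧ Lh + Mh * Bw ≤ v :=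
    ⟨_, by positivity, le_rfl⟩
  obtain ⟨Kc, hKcpos, hKcge⟩ : ∃ v : ℝ, 0 < v ∧ Lh / c + Mh / 8 + Cphi / (8 * c) ≤ v :=
    ⟨Lh / c + Mh / 8 + Cphi / (8 * c) + 1, by positivity, by linarith⟩
  refine ⟨Kc ^ p, pow_pos hKcpos p, ?_⟩
  intro ε δ hε hε1 hδ hδ1 t ht
  -- local function definitions
  obtain ⟨w, hwdef⟩ : ∃ g : ℝ → ℝ, g = fun u => deriv f (x u) + deriv κ (x u) := ⟨_, rfl⟩
  obtain ⟨hh, hhdef⟩ : ∃ g : ℝ → ℝ, g = fun s => deriv κ (x s) * f (x s) := ⟨_, rfl⟩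
  obtain ⟨Et, hEtdef⟩ : ∃ g : ℝ → ℝ, g = fun s => Real.exp (∫ u in s..t, w u) := ⟨_, rfl⟩
  obtain ⟨φ, hφdef⟩ : ∃ g : ℝ → ℝ, g = fun s => hh s * Et s := ⟨_, rfl⟩
  obtain ⟨hh', hh'def⟩ : ∃ g : ℝ → ℝ, g = fun s =>
    (deriv (deriv κ) (x s) * f (x s) + deriv κ (x s) * deriv f (x s)) * (f (x s) + κ (x s)) := ⟨_, rfl⟩
  obtain ⟨φ', hφ'def⟩ : ∃ g : ℝ → ℝ, g = fun s => (hh' s - hh s * w s) * Et s := ⟨_, rfl⟩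
  obtain ⟨A, hAdef⟩ : ∃ g : ℝ → ℝ, g = fun s => (hh (piD δ s) - hh s) * ((s - piD δ s) * Et s) := ⟨_, rfl⟩
  obtain ⟨ψφ, hψφdef⟩ : ∃ g : ℝ → ℝ, g = fun s => (s - piD δ s - δ / 2) * φ s := ⟨_, rfl⟩
  -- pointwise bounds
  have hhbd : ∀ s : ℝ, 0 ≤ s → |hh s| ≤ Mh := by
    intro s hs
    rw [hhdef]
    simp only
    rw [abs_mul]
    exact le_trans (mul_le_mul (hκ'le _) (hMf s hs) (abs_nonneg _) hLκ.le) hMhge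
  have hwle : ∀ u : ℝ, 0 ≤ u → w u ≤ -c := by
    intro u hu
    have h1 := hf'le (x u)
    have h2 := (abs_le.mp (hκ'le (x u))).2
    rw [hwdef]
    simp only
    linarith [hcle]
  have hwbd : ∀ u : ℝ, 0 ≤ u → |w u| ≤ Bw := by
    intro u hu
    rw [hwdef]
    simp only
    calc |deriv f (x u) + deriv κ (x u)| ≤ |deriv f (x u)| + |deriv κ (x u)| := abs_add_le _ _
      _ ≤ Df + Lκ := add_le_add (hDf u hu) (hκ'le _)
      _ ≤ Bw := hBwge
  have hh'bd : ∀ s : ℝ, 0 ≤ s → |hh' s| ≤ Lh := by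
    intro s hs
    rw [hh'def]
    simp only
    rw [abs_mul]
    refine le_trans (mul_le_mul ?_ (hBg s hs) (abs_nonneg _) (by positivity)) hLhge
    calc |deriv (deriv κ) (x s) * f (x s) + deriv κ (x s) * deriv f (x s)|
        ≤ |deriv (deriv κ) (x s) * f (x s)| + |deriv κ (x s) * deriv f (x s)| := abs_add_le _ _
      _ ≤ K * Mf + Lκ * Df := by
          rw [abs_mul, abs_mul]
          exact add_le_add
            (mul_le_mul (hK _) (hMf s hs) (abs_nonneg _) hKnn)
            (mul_le_mul (hκ'le _) (hDf s hs) (abs_nonneg _) hLκ.le)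
  -- continuity facts
  have hIocIci : Ioc (0:ℝ) t ⊆ Ici 0 := fun u hu => hu.1.le
  have hIccIci : Icc (0:ℝ) t ⊆ Ici 0 := fun u hu => hu.1
  have hwcont : ContinuousOn w (Ici 0) := by
    rw [hwdef]
    exact (hfd2.continuous.comp_continuousOn hxcont).add
      (hκd2.continuous.comp_continuousOn hxcont)
  have hhcont : ContinuousOn hh (Ici 0) := by
    rw [hhdef]
    exact (hκd2.continuous.comp_continuousOn hxcont).mul
      (hfd.continuous.comp_continuousOn hxcont)
  have hwiv : ∀ a b : ℝ, 0 ≤ a → a ≤ b → IntervalIntegrable w volume a b := by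
    intro a b ha hab
    apply ContinuousOn.intervalIntegrable
    refine hwcont.mono ?_
    rw [uIcc_of_le hab]
    exact fun u hu => le_trans ha hu.1
  have hEbd : ∀ s : ℝ, 0 ≤ s → s ≤ t → Et s ≤ Real.exp (-(c * (t - s))) := by
    intro s hs hst
    rw [hEtdef]
    simp only
    rw [Real.exp_le_exp]
    have h1 : ∫ u in s..t, w u ≤ ∫ u in s..t, (-c : ℝ) :=
      intervalIntegral.integral_mono_on hst (hwiv s t hs hst) intervalIntegrable_const
        (fun u hu => hwle u (le_trans hs hu.1))
    rw [intervalIntegral.integral_const] at h1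
    calc ∫ u in s..t, w u ≤ (t - s) • (-c : ℝ) := h1
      _ = -(c * (t - s)) := by simp [smul_eq_mul]; ring
  have hEpos : ∀ s : ℝ, 0 < Et s := fun s => by rw [hEtdef]; exact Real.exp_pos _
  have hEle1 : ∀ s : ℝ, 0 ≤ s → s ≤ t → Et s ≤ 1 := by
    intro s hs hst
    refine le_trans (hEbd s hs hst) ?_
    rw [← Real.exp_zero, Real.exp_le_exp]
    have hcc : 0 ≤ c * (t - s) := mul_nonneg hcpos.le (by linarith)
    linarith
  have hEt1 : Et t = 1 := by
    rw [hEtdef]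
    simp only
    rw [intervalIntegral.integral_same, Real.exp_zero]
  have hEcont : ContinuousOn Et (Icc 0 t) := by
    have hprim : ContinuousOn (fun s => ∫ u in (0:ℝ)..s, w u) (Icc 0 t) := by
      have := intervalIntegral.continuousOn_primitive_interval
        (a := (0:ℝ)) (b := t) (μ := volume) (f := w)
        (by
          rw [uIcc_of_le ht]
          exact (integrableOn_Icc_iff_integrableOn_Ioc).mpr
            ((intervalIntegrable_iff_integrableOn_Ioc_of_le ht).mp (hwiv 0 t le_rfl ht)))
      rwa [uIcc_of_le ht] at this
    have heq : ∀ s ∈ Icc (0:ℝ) t, Et s =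
        Real.exp ((∫ u in (0:ℝ)..t, w u) - ∫ u in (0:ℝ)..s, w u) := by
      intro s hs
      rw [hEtdef]
      simp only
      congr 1
      rw [intervalIntegral.integral_interval_sub_left (hwiv 0 t le_rfl ht)
        (hwiv 0 s le_rfl hs.1)]
    exact (Real.continuous_exp.comp_continuousOn
      (continuousOn_const.sub hprim)).congr heq
  have hEd : ∀ s ∈ Ioo (0:ℝ) t, HasDerivAt Et (-(w s) * Et s) s := by
    intro s hs
    have hsm : StronglyMeasurableAtFilter w (𝓝 s) volume :=
      (hwcont.mono Ioi_subset_Ici_self).stronglyMeasurableAtFilter isOpen_Ioi s hs.1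
    have hca : ContinuousAt w s :=
      hwcont.continuousAt (Filter.mem_of_superset (Ioi_mem_nhds hs.1) Ioi_subset_Ici_self)
    have hinner : HasDerivAt (fun u => ∫ v in u..t, w v) (-(w s)) s :=
      intervalIntegral.integral_hasDerivAt_left (hwiv s t hs.1.le hs.2.le) hsm hca
    have := hinner.exp
    rw [hEtdef]
    simp only
    convert this using 1
    rw [mul_comm]
  -- derivative of hh within Ici 0
  have hDWh : ∀ s ∈ Ici (0:ℝ), HasDerivWithinAt hh (hh' s) (Ici 0) s := by
    intro s hs
    have hx' := hdivi s hs
    have h1 : HasDerivWithinAt (fun u => deriv κ (x u))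
        (deriv (deriv κ) (x s) * (f (x s) + κ (x s))) (Ici 0) s :=
      (hκd2 (x s)).hasDerivAt.comp_hasDerivWithinAt s hx'
    have h2 : HasDerivWithinAt (fun u => f (x u))
        (deriv f (x s) * (f (x s) + κ (x s))) (Ici 0) s :=
      (hfd (x s)).hasDerivAt.comp_hasDerivWithinAt s hx'
    have := h1.fun_mul h2
    rw [hhdef, hh'def]
    simp only
    refine this.congr_deriv ?_
    ring
  have hhlip : ∀ a b : ℝ, 0 ≤ a → 0 ≤ b → |hh b - hh a| ≤ Lh * |b - a| := by
    intro a b ha hb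
    have := Convex.norm_image_sub_le_of_norm_hasDerivWithin_le
      (f := hh) (f' := hh') (s := Ici (0:ℝ)) (fun u hu => hDWh u hu)
      (fun u hu => by rw [Real.norm_eq_abs]; exact hh'bd u hu) (convex_Ici 0) ha hb
    simpa [Real.norm_eq_abs] using this
  -- derivative of φ
  have hφd : ∀ s ∈ Ioo (0:ℝ) t, HasDerivAt φ (φ' s) s := by
    intro s hs
    have hhd : HasDerivAt hh (hh' s) s :=
      (hDWh s hs.1.le).hasDerivAt
        (Filter.mem_of_superset (Ioi_mem_nhds hs.1) Ioi_subset_Ici_self)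
    have := hhd.fun_mul (hEd s hs)
    rw [hφdef, hφ'def]
    simp only
    refine this.congr_deriv ?_
    ring
  have hφ'bd : ∀ s ∈ Icc (0:ℝ) t, |φ' s| ≤ Cphi * Real.exp (-(c * (t - s))) := by
    intro s hs
    rw [hφ'def]
    simp only
    rw [abs_mul]
    have h1 : |hh' s - hh s * w s| ≤ Cphi := by
      calc |hh' s - hh s * w s| ≤ |hh' s| + |hh s * w s| := abs_sub _ _
        _ ≤ Lh + Mh * Bw := by
            refine add_le_add (hh'bd s hs.1) ?_
            rw [abs_mul]
            exact mul_le_mul (hhbd s hs.1) (hwbd s hs.1) (abs_nonneg _) hMhnn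
        _ ≤ Cphi := hCphige
    have h2 : |Et s| ≤ Real.exp (-(c * (t - s))) := by
      rw [abs_of_pos (hEpos s)]
      exact hEbd s hs.1 hs.2
    exact mul_le_mul h1 h2 (abs_nonneg _) hCphinn
  -- measurability
  have hmfloor : Measurable fun s : ℝ => (⌊s / δ⌋ : ℤ) :=
    Int.measurable_floor.comp (measurable_id.div_const δ)
  have hmPi : Measurable (piD δ) :=
    (measurable_of_countable (fun k : ℤ => δ * (k : ℝ))).comp hmfloor
  have hmXpi : Measurable fun s => x (piD δ s) :=
    (measurable_of_countable (fun k : ℤ => x (δ * (k : ℝ)))).comp hmfloor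
  have hmhpi : Measurable fun s => hh (piD δ s) := by
    simp only [hhdef]
    exact (hκd2.continuous.measurable.comp hmXpi).mul (hfd.continuous.measurable.comp hmXpi)
  have hmx : AEMeasurable x (volume.restrict (Ioc 0 t)) :=
    ((hxcont.mono hIocIci).aestronglyMeasurable measurableSet_Ioc).aemeasurable
  have hmh : AEMeasurable hh (volume.restrict (Ioc 0 t)) :=
    ((hhcont.mono hIocIci).aestronglyMeasurable measurableSet_Ioc).aemeasurable
  have hmφ : AEMeasurable φ (volume.restrict (Ioc 0 t)) := by
    rw [hφdef]
    exact hmh.mul (((hEcont.mono Ioc_subset_Icc_self).aestronglyMeasurable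
      measurableSet_Ioc).aemeasurable)
  have hmw : AEMeasurable w (volume.restrict (Ioc 0 t)) :=
    ((hwcont.mono hIocIci).aestronglyMeasurable measurableSet_Ioc).aemeasurable
  have hmE : AEMeasurable Et (volume.restrict (Ioc 0 t)) :=
    ((hEcont.mono Ioc_subset_Icc_self).aestronglyMeasurable measurableSet_Ioc).aemeasurable
  have hmh' : AEMeasurable hh' (volume.restrict (Ioc 0 t)) := by
    rw [hh'def]
    exact (((measurable_deriv (deriv κ)).comp_aemeasurable hmx).mul
        (hfd.continuous.measurable.comp_aemeasurable hmx)).add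
        ((hκd2.continuous.measurable.comp_aemeasurable hmx).mul
        (hfd2.continuous.measurable.comp_aemeasurable hmx)) |>.mul
        (hFc.measurable.comp_aemeasurable hmx)
  have hmφ' : AEMeasurable φ' (volume.restrict (Ioc 0 t)) := by
    rw [hφ'def]
    exact (hmh'.sub (hmh.mul hmw)).mul hmE
  -- integrability helper
  have hIvv : ∀ u : ℝ → ℝ, AEMeasurable u (volume.restrict (Ioc 0 t)) → ∀ M : ℝ,
      (∀ s ∈ Ioc (0:ℝ) t, |u s| ≤ M) → IntervalIntegrable u volume 0 t := by
    intro u hm M hM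
    rw [intervalIntegrable_iff_integrableOn_Ioc_of_le ht]
    refine Integrable.mono' (g := fun _ => M)
      ((integrableOn_const_iff).mpr (Or.inr measure_Ioc_lt_top)) hm.aestronglyMeasurable ?_
    rw [ae_restrict_iff' measurableSet_Ioc]
    filter_upwards with s hs
    rw [Real.norm_eq_abs]
    exact hM s hs
  -- bounds for the sampling quantities
  have hsub_nonneg : ∀ s : ℝ, 0 ≤ s - piD δ s := fun s => by linarith [piD_le hδ s]
  have hsub_lt : ∀ s : ℝ, s - piD δ s < δ := fun s => by linarith [lt_piD_add hδ s]
  have hhpibd : ∀ s : ℝ, 0 ≤ s → |hh (piD δ s)| ≤ Mh := fun s hs =>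
    hhbd _ (piD_nonneg hδ hs)
  -- integrability of the pieces
  have hIA : IntervalIntegrable A volume 0 t := by
    refine hIvv A ?_ ((Mh + Mh) * (δ * 1)) ?_
    · rw [hAdef]
      exact ((hmhpi.aemeasurable.sub hmh)).mul
        (((measurable_id.sub hmPi).aemeasurable).mul hmE)
    · intro s hs
      rw [hAdef]
      simp only
      rw [abs_mul]
      refine mul_le_mul ?_ ?_ (abs_nonneg _) (by positivity)
      · calc |hh (piD δ s) - hh s| ≤ |hh (piD δ s)| + |hh s| := abs_sub _ _
          _ ≤ Mh + Mh := add_le_add (hhpibd s hs.1.le) (hhbd s hs.1.le)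
      · rw [abs_mul]
        refine mul_le_mul ?_ ?_ (abs_nonneg _) hδ.le
        · rw [abs_of_nonneg (hsub_nonneg s)]
          exact (hsub_lt s).le
        · rw [abs_of_pos (hEpos s)]
          exact hEle1 s hs.1.le hs.2
  have hIψφ : IntervalIntegrable ψφ volume 0 t := by
    refine hIvv ψφ ?_ ((δ + δ / 2) * (Mh * 1)) ?_
    · rw [hψφdef, hφdef]
      exact (((measurable_id.sub hmPi).aemeasurable).sub aemeasurable_const).mul (hmh.mul hmE)
    · intro s hs
      rw [hψφdef]
      simp only
      rw [abs_mul]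
      refine mul_le_mul ?_ ?_ (abs_nonneg _) (by positivity)
      · calc |s - piD δ s - δ / 2| ≤ |s - piD δ s| + |δ / 2| := abs_sub _ _
          _ ≤ δ + δ / 2 := by
              rw [abs_of_nonneg (hsub_nonneg s), abs_of_pos (by positivity : (0:ℝ) < δ / 2)]
              exact add_le_add (hsub_lt s).le le_rfl
      · rw [hφdef]
        simp only
        rw [abs_mul]
        refine mul_le_mul (hhbd s hs.1.le) ?_ (abs_nonneg _) hMhnn
        rw [abs_of_pos (hEpos s)]
        exact hEle1 s hs.1.le hs.2
  have hIρφ' : IntervalIntegrable (fun s => rhoD δ s * φ' s) volume 0 t := by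
    have hmρ : AEMeasurable (rhoD δ) (volume.restrict (Ioc 0 t)) :=
      (rhoD_continuous hδ).measurable.aemeasurable
    have hmρφ' : AEMeasurable (fun s => rhoD δ s * φ' s) (volume.restrict (Ioc 0 t)) :=
      hmρ.mul hmφ'
    refine hIvv _ hmρφ' ((δ ^ 2 / 8) * (Cphi * 1)) ?_
    intro s hs
    rw [abs_mul]
    refine mul_le_mul (rhoD_bound hδ s) ?_ (abs_nonneg _) (by positivity)
    refine le_trans (hφ'bd s ⟨hs.1.le, hs.2⟩) ?_
    have : Real.exp (-(c * (t - s))) ≤ 1 := by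
      rw [← Real.exp_zero, Real.exp_le_exp]
      have : 0 ≤ c * (t - s) := mul_nonneg hcpos.le (by linarith [hs.2])
      linarith
    nlinarith
  -- the exponential integral bound
  have hIexp : IntervalIntegrable (fun s => Real.exp (-(c * (t - s)))) volume 0 t := by
    apply Continuous.intervalIntegrable
    exact Real.continuous_exp.comp (by continuity)
  have hexp_int : ∫ s in (0:ℝ)..t, Real.exp (-(c * (t - s))) ≤ 1 / c := by
    have hanti : ∀ s ∈ uIcc (0:ℝ) t,
        HasDerivAt (fun u => Real.exp (-(c * (t - u))) / c) (Real.exp (-(c * (t - s)))) s := by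
      intro s _
      have h1 : HasDerivAt (fun u : ℝ => -(c * (t - u))) c s := by
        have := (((hasDerivAt_id s).const_sub t).const_mul c).fun_neg
        simpa using this
      have := h1.exp.div_const c
      refine this.congr_deriv ?_
      exact mul_div_cancel_right₀ _ hcpos.ne'
    have heq := intervalIntegral.integral_eq_sub_of_hasDerivAt hanti hIexp
    rw [heq]
    have h2 : 0 < Real.exp (-(c * (t - 0))) := Real.exp_pos _
    have h3 : Real.exp (-(c * (t - t))) = 1 := by
      simp
    rw [h3]
    have h4 : 0 < Real.exp (-(c * (t - 0))) / c := div_pos h2 hcpos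
    linarith
  -- FTC for P = ρ * φ
  have hPc : ContinuousOn (fun s => rhoD δ s * φ s) (Icc 0 t) := by
    refine ((rhoD_continuous hδ).continuousOn).mul ?_
    rw [hφdef]
    exact (hhcont.mono hIccIci).mul hEcont
  have hPd : ∀ s ∈ Ioo (0:ℝ) t,
      HasDerivWithinAt (fun u => rhoD δ u * φ u) (ψφ s + rhoD δ s * φ' s) (Ioi s) s := by
    intro s hs
    have := (rhoD_hasDeriv hδ s).mul ((hφd s hs).hasDerivWithinAt)
    rw [hψφdef]
    simp only
    exact this
  have hFTC : ∫ s in (0:ℝ)..t, (ψφ s + rhoD δ s * φ' s) = rhoD δ t * φ t - rhoD δ 0 * φ 0 :=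
    intervalIntegral.integral_eq_sub_of_hasDeriv_right_of_le ht hPc hPd (hIψφ.add hIρφ')
  have hsplit : ∫ s in (0:ℝ)..t, ψφ s
      = rhoD δ t * φ t - rhoD δ 0 * φ 0 - ∫ s in (0:ℝ)..t, rhoD δ s * φ' s := by
    rw [intervalIntegral.integral_add hIψφ hIρφ'] at hFTC
    linarith
  -- bound on ∫ |ρ φ'|
  have hρφ'int : ∫ s in (0:ℝ)..t, |rhoD δ s * φ' s| ≤ δ ^ 2 / 8 * Cphi * (1 / c) := by
    have h1 : ∀ s ∈ Icc (0:ℝ) t,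
        |rhoD δ s * φ' s| ≤ (δ ^ 2 / 8 * Cphi) * Real.exp (-(c * (t - s))) := by
      intro s hs
      rw [abs_mul]
      have := mul_le_mul (rhoD_bound hδ s) (hφ'bd s hs) (abs_nonneg _) (by positivity)
      calc |rhoD δ s| * |φ' s| ≤ δ ^ 2 / 8 * (Cphi * Real.exp (-(c * (t - s)))) := this
        _ = (δ ^ 2 / 8 * Cphi) * Real.exp (-(c * (t - s))) := by ring
    calc ∫ s in (0:ℝ)..t, |rhoD δ s * φ' s|
        ≤ ∫ s in (0:ℝ)..t, (δ ^ 2 / 8 * Cphi) * Real.exp (-(c * (t - s))) :=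
          intervalIntegral.integral_mono_on ht hIρφ'.abs (hIexp.const_mul _) h1
      _ = (δ ^ 2 / 8 * Cphi) * ∫ s in (0:ℝ)..t, Real.exp (-(c * (t - s))) :=
          intervalIntegral.integral_const_mul _ _
      _ ≤ δ ^ 2 / 8 * Cphi * (1 / c) :=
          mul_le_mul_of_nonneg_left hexp_int (by positivity)
  -- bound on |∫ A|
  have hAint : |∫ s in (0:ℝ)..t, A s| ≤ Lh * δ ^ 2 * (1 / c) := by
    have h0 : |∫ s in (0:ℝ)..t, A s| ≤ ∫ s in (0:ℝ)..t, |A s| := by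
      have := intervalIntegral.norm_integral_le_integral_norm (f := A) (μ := volume) ht
      simpa [Real.norm_eq_abs] using this
    have h1 : ∀ s ∈ Icc (0:ℝ) t, |A s| ≤ (Lh * δ ^ 2) * Real.exp (-(c * (t - s))) := by
      intro s hs
      rw [hAdef]
      simp only
      rw [abs_mul]
      have e1 : |hh (piD δ s) - hh s| ≤ Lh * δ := by
        have := hhlip s (piD δ s) hs.1 (piD_nonneg hδ hs.1)
        have habs : |piD δ s - s| = s - piD δ s := by
          rw [abs_sub_comm, abs_of_nonneg (hsub_nonneg s)]
        rw [habs] at this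
        refine le_trans this ?_
        have := (hsub_lt s).le
        nlinarith
      have e2 : |(s - piD δ s) * Et s| ≤ δ * Real.exp (-(c * (t - s))) := by
        rw [abs_mul]
        refine mul_le_mul ?_ ?_ (abs_nonneg _) hδ.le
        · rw [abs_of_nonneg (hsub_nonneg s)]
          exact (hsub_lt s).le
        · rw [abs_of_pos (hEpos s)]
          exact hEbd s hs.1 hs.2
      calc |hh (piD δ s) - hh s| * |(s - piD δ s) * Et s|
          ≤ (Lh * δ) * (δ * Real.exp (-(c * (t - s)))) :=
            mul_le_mul e1 e2 (abs_nonneg _) (by positivity)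
        _ = (Lh * δ ^ 2) * Real.exp (-(c * (t - s))) := by ring
    have hIAabs : IntervalIntegrable (fun s => |A s|) volume 0 t := hIA.abs
    calc |∫ s in (0:ℝ)..t, A s| ≤ ∫ s in (0:ℝ)..t, |A s| := h0
      _ ≤ ∫ s in (0:ℝ)..t, (Lh * δ ^ 2) * Real.exp (-(c * (t - s))) :=
          intervalIntegral.integral_mono_on ht hIAabs (hIexp.const_mul _) h1
      _ = (Lh * δ ^ 2) * ∫ s in (0:ℝ)..t, Real.exp (-(c * (t - s))) :=
          intervalIntegral.integral_const_mul _ _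
      _ ≤ Lh * δ ^ 2 * (1 / c) := mul_le_mul_of_nonneg_left hexp_int (by positivity)
  -- bound on |∫ ψφ|
  have hψφint : |∫ s in (0:ℝ)..t, ψφ s| ≤ δ ^ 2 / 8 * Mh + δ ^ 2 / 8 * Cphi * (1 / c) := by
    rw [hsplit]
    have e1 : |rhoD δ t * φ t| ≤ δ ^ 2 / 8 * Mh := by
      rw [abs_mul]
      refine mul_le_mul (rhoD_bound hδ t) ?_ (abs_nonneg _) (by positivity)
      rw [hφdef]
      simp only
      rw [hEt1, mul_one]
      exact hhbd t ht
    have e2 : rhoD δ 0 * φ 0 = 0 := by rw [rhoD_zero hδ, zero_mul]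
    have e3 : |∫ s in (0:ℝ)..t, rhoD δ s * φ' s| ≤ δ ^ 2 / 8 * Cphi * (1 / c) := by
      have h0 : |∫ s in (0:ℝ)..t, rhoD δ s * φ' s| ≤ ∫ s in (0:ℝ)..t, |rhoD δ s * φ' s| := by
        have := intervalIntegral.norm_integral_le_integral_norm
          (f := fun s => rhoD δ s * φ' s) (μ := volume) ht
        simp only [Real.norm_eq_abs] at this
        exact this
      exact le_trans h0 hρφ'int
    rw [e2, sub_zero]
    calc |rhoD δ t * φ t - ∫ s in (0:ℝ)..t, rhoD δ s * φ' s|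
        ≤ |rhoD δ t * φ t| + |∫ s in (0:ℝ)..t, rhoD δ s * φ' s| := abs_sub _ _
      _ ≤ δ ^ 2 / 8 * Mh + δ ^ 2 / 8 * Cphi * (1 / c) := add_le_add e1 e3
  -- rewrite the goal's integral
  have hGcongr : (∫ s in (0:ℝ)..t,
      ((1 / ε) * deriv κ (x (piD δ s)) * f (x (piD δ s)) * (s - piD δ s)
        - (δ / (2 * ε)) * deriv κ (x s) * f (x s)) *
        Real.exp (∫ u in s..t, (deriv f (x u) + deriv κ (x u))))
      = (1 / ε) * (∫ s in (0:ℝ)..t, A s) + (1 / ε) * (∫ s in (0:ℝ)..t, ψφ s) := by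
    have h1 : ∀ s : ℝ,
        ((1 / ε) * deriv κ (x (piD δ s)) * f (x (piD δ s)) * (s - piD δ s)
          - (δ / (2 * ε)) * deriv κ (x s) * f (x s)) *
          Real.exp (∫ u in s..t, (deriv f (x u) + deriv κ (x u)))
        = (1 / ε) * A s + (1 / ε) * ψφ s := by
      intro s
      simp only [hAdef, hψφdef, hφdef, hhdef, hEtdef, hwdef]
      ring
    rw [intervalIntegral.integral_congr (g := fun s => (1 / ε) * A s + (1 / ε) * ψφ s)
      (fun s _ => h1 s)]
    rw [intervalIntegral.integral_add (hIA.const_mul _) (hIψφ.const_mul _),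
      intervalIntegral.integral_const_mul, intervalIntegral.integral_const_mul]
  have hfinal : |∫ s in (0:ℝ)..t,
      ((1 / ε) * deriv κ (x (piD δ s)) * f (x (piD δ s)) * (s - piD δ s)
        - (δ / (2 * ε)) * deriv κ (x s) * f (x s)) *
        Real.exp (∫ u in s..t, (deriv f (x u) + deriv κ (x u)))| ≤ Kc * δ ^ 2 / ε := by
    rw [hGcongr]
    have hεnn : (0:ℝ) ≤ 1 / ε := by positivity
    calc |(1 / ε) * (∫ s in (0:ℝ)..t, A s) + (1 / ε) * (∫ s in (0:ℝ)..t, ψφ s)|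
        ≤ |(1 / ε) * (∫ s in (0:ℝ)..t, A s)| + |(1 / ε) * (∫ s in (0:ℝ)..t, ψφ s)| :=
          abs_add_le _ _
      _ = (1 / ε) * |∫ s in (0:ℝ)..t, A s| + (1 / ε) * |∫ s in (0:ℝ)..t, ψφ s| := by
          rw [abs_mul, abs_mul, abs_of_nonneg hεnn]
      _ ≤ (1 / ε) * (Lh * δ ^ 2 * (1 / c))
          + (1 / ε) * (δ ^ 2 / 8 * Mh + δ ^ 2 / 8 * Cphi * (1 / c)) :=
          add_le_add (mul_le_mul_of_nonneg_left hAint hεnn)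
            (mul_le_mul_of_nonneg_left hψφint hεnn)
      _ = (1 / ε) * (δ ^ 2 * (Lh / c + Mh / 8 + Cphi / (8 * c))) := by
          field_simp
          ring
      _ ≤ (1 / ε) * (δ ^ 2 * Kc) := by
          refine mul_le_mul_of_nonneg_left ?_ hεnn
          exact mul_le_mul_of_nonneg_left hKcge (by positivity)
      _ = Kc * δ ^ 2 / ε := by ring
  have habs0 : (0:ℝ) ≤ |∫ s in (0:ℝ)..t,
      ((1 / ε) * deriv κ (x (piD δ s)) * f (x (piD δ s)) * (s - piD δ s)
        - (δ / (2 * ε)) * deriv κ (x s) * f (x s)) *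
        Real.exp (∫ u in s..t, (deriv f (x u) + deriv κ (x u)))| := abs_nonneg _
  calc |∫ s in (0:ℝ)..t,
      ((1 / ε) * deriv κ (x (piD δ s)) * f (x (piD δ s)) * (s - piD δ s)
        - (δ / (2 * ε)) * deriv κ (x s) * f (x s)) *
        Real.exp (∫ u in s..t, (deriv f (x u) + deriv κ (x u)))| ^ p
      ≤ (Kc * δ ^ 2 / ε) ^ p := pow_le_pow_left₀ habs0 hfinal p
    _ = Kc ^ p * δ ^ (2 * p) / ε ^ p := by
        rw [div_pow, mul_pow, ← pow_mul]
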